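/- With the same definitions (Gᵞ = (1/2)Σ_λ R_{γλ}(R⁻¹)ᵀH^λR⁻¹, H^λ symmetric), all four diagonal mode-coupling elements are given in closed form: G¹₂₂ = (z₋²/(2v²z₊))[u₊²(H¹₁₁+u₊H²₁₁) − 2u₊(H¹₁₂+u₊H²₁₂) + H¹₂₂ + u₊H²₂₂], G²₁₁ = (z₊²/(2v²z₋))[u₋H¹₁₁+H²₁₁ − 2u₋(u₋H¹₁₂+H²₁₂) + u₋²(u₋H¹₂₂+H²₂₂)], and G²₂₂ = (z₋/(2v²))[u₊²(u₋H¹₁₁+H²₁₁) − 2u₊(u₋H¹₁₂+H²₁₂) + u₋H¹₂₂+H²₂₂]. -/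

import Mathlib

open Matrix

theorem stmt_10 (uP uM v zP zM : ℝ) (H1 H2 : Matrix (Fin 2) (Fin 2) ℝ)
    (hH1 : H1ᵀ = H1) (hH2 : H2ᵀ = H2)
    (hv : v = 1 - uP * uM) (hv0 : v ≠ 0)
    (hzP : 0 < zP) (hzM : 0 < zM) :
    let R : Matrix (Fin 2) (Fin 2) ℝ := !![1/zP, uP/zP; uM/zM, 1/zM]
    let Rinv : Matrix (Fin 2) (Fin 2) ℝ := v⁻¹ • !![zP, -zM * uP; -zP * uM, zM]
    let G1 : Matrix (Fin 2) (Fin 2) ℝ :=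
      (1/2 : ℝ) • (R 0 0 • (Rinvᵀ * H1 * Rinv) + R 0 1 • (Rinvᵀ * H2 * Rinv))
    let G2 : Matrix (Fin 2) (Fin 2) ℝ :=
      (1/2 : ℝ) • (R 1 0 • (Rinvᵀ * H1 * Rinv) + R 1 1 • (Rinvᵀ * H2 * Rinv))
    (G1 1 1 = (zM^2 / (2 * v^2 * zP)) * (uP^2 * (H1 0 0 + uP * H2 0 0)
        - 2 * uP * (H1 0 1 + uP * H2 0 1) + H1 1 1 + uP * H2 1 1)) ∧
    (G2 0 0 = (zP^2 / (2 * v^2 * zM)) * (uM * H1 0 0 + H2 0 0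
        - 2 * uM * (uM * H1 0 1 + H2 0 1)
        + uM^2 * (uM * H1 1 1 + H2 1 1))) ∧
    (G2 1 1 = (zM / (2 * v^2)) * (uP^2 * (uM * H1 0 0 + H2 0 0)
        - 2 * uP * (uM * H1 0 1 + H2 0 1) + uM * H1 1 1 + H2 1 1)) := by
  have h10 : H1 1 0 = H1 0 1 := congrFun (congrFun hH1 0) 1
  have h20 : H2 1 0 = H2 0 1 := congrFun (congrFun hH2 0) 1
  intro R Rinv G1 G2
  refine ⟨?_, ?_, ?_⟩ <;>
  · simp only [G1, G2, R, Rinv, Matrix.add_apply, Matrix.smul_apply, Matrix.mul_apply,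
      Matrix.transpose_apply, Fin.sum_univ_two, Matrix.cons_val', Matrix.cons_val_zero,
      Matrix.cons_val_one, Matrix.head_cons, Matrix.empty_val', Matrix.cons_val_fin_one,
      Matrix.head_fin_const, smul_eq_mul, Matrix.of_apply]
    rw [h10, h20]
    field_simp
    ring
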